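/- Let J₄ be the 4×4 integer matrix with rows (0, 0, 1, 0), (0, 1, 0, 0), (1, 0, 0, 0), (−1, −1, −1, −1). Then J₄ is invertible and for every integer k ≥ 1 one has Z₄(k) = J₄ · A₄(k)⁻¹ · J₄⁻¹, equivalently Z₄(k)·J₄ = J₄·A₄(k)⁻¹. -/
import Mathlib


/-- The matrix `A₄(k)` (over `ℤ`) with rows `(0,0,k,k−1)`, `(1,0,0,0)`, `(0,1,0,0)`, `(0,0,1,1)`. -/
def A4 (k : ℤ) : Matrix (Fin 4) (Fin 4) ℤ :=
  !![0, 0, k, k - 1; 1, 0, 0, 0; 0, 1, 0, 0; 0, 0, 1, 1]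

/-- The matrix `Z₄(k)` (over `ℤ`) with rows `(k−1,k−1,k,k−1)`, `(1,0,0,0)`, `(0,1,0,0)`, `(0,0,1,1)`. -/
def Z4 (k : ℤ) : Matrix (Fin 4) (Fin 4) ℤ :=
  !![k - 1, k - 1, k, k - 1; 1, 0, 0, 0; 0, 1, 0, 0; 0, 0, 1, 1]

/-- The conjugating matrix `J₄` with rows `(0,0,1,0)`, `(0,1,0,0)`, `(1,0,0,0)`, `(−1,−1,−1,−1)`. -/
def J4 : Matrix (Fin 4) (Fin 4) ℤ :=
  !![0, 0, 1, 0; 0, 1, 0, 0; 1, 0, 0, 0; -1, -1, -1, -1]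

/-- Explicit inverse of `A₄(k)`. -/
def B4 (k : ℤ) : Matrix (Fin 4) (Fin 4) ℤ :=
  !![0, 1, 0, 0; 0, 0, 1, 0; 1, 0, 0, 1 - k; -1, 0, 0, k]

lemma A4_inv (k : ℤ) : (A4 k)⁻¹ = B4 k := by
  apply Matrix.inv_eq_right_inv
  ext i j
  fin_cases i <;> fin_cases j <;>
    simp [A4, B4, Matrix.mul_apply, Fin.sum_univ_four, Matrix.one_apply, Matrix.vecHead, Matrix.vecTail] <;> ring

lemma J4_det : J4.det = 1 := by
  simp [J4, Matrix.det_succ_row_zero, Fin.sum_univ_succ]; decide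

lemma J4_unit : IsUnit J4 := by
  rw [Matrix.isUnit_iff_isUnit_det, J4_det]; exact isUnit_one

/-- `J₄` is invertible and conjugates `A₄(k)⁻¹` to `Z₄(k)`, for every `k ≥ 1`. -/
theorem Z4_conjugate_A4_inv :
    IsUnit J4 ∧
    ∀ k : ℤ, 1 ≤ k →
      Z4 k * J4 = J4 * (A4 k)⁻¹ ∧
      Z4 k = J4 * (A4 k)⁻¹ * J4⁻¹ := by
  refine ⟨J4_unit, fun k _ => ?_⟩
  have h : Z4 k * J4 = J4 * (A4 k)⁻¹ := by
    rw [A4_inv]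
    ext i j
    fin_cases i <;> fin_cases j <;>
      simp [Z4, J4, B4, Matrix.mul_apply, Fin.sum_univ_four, Matrix.vecHead, Matrix.vecTail] <;> ring
  refine ⟨h, ?_⟩
  have hd : IsUnit J4.det := by rw [J4_det]; exact isUnit_one
  calc Z4 k = Z4 k * J4 * J4⁻¹ := by rw [Matrix.mul_nonsing_inv_cancel_right _ _ hd]
    _ = J4 * (A4 k)⁻¹ * J4⁻¹ := by rw [h]
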